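/- arXiv:2405.05895 — 5 statements merged into one kernel-verified Lean document; each statement's English description precedes it below -/
import Mathlib

section
/- Let a, b ≥ 0 with |a − b| ≥ 2. Then with m = (a+b+3)(a+1)(b+2)/2 and n = (a+b+3)(a+2)(b+1)/2, we have ⌈(m+n+a+b+3)/2⌉ ≤ max(m, n). -/
theorem stmt8 (a b : ℤ) (ha : 0 ≤ a) (hb : 0 ≤ b) (hab : 2 ≤ |a - b|) (m n : ℚ)
    (hm : m = ((a + b + 3) * (a + 1) * (b + 2) : ℚ) / 2)
    (hn : n = ((a + b + 3) * (a + 2) * (b + 1) : ℚ) / 2) :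
    (⌈(m + n + a + b + 3) / 2⌉ : ℚ) ≤ max m n := by
  have haQ : (0 : ℚ) ≤ (a : ℚ) := by exact_mod_cast ha
  have hbQ : (0 : ℚ) ≤ (b : ℚ) := by exact_mod_cast hb
  rcases le_abs.mp hab with h | h
  · -- a - b ≥ 2, max = m
    have hQ : (2 : ℚ) ≤ (a : ℚ) - (b : ℚ) := by exact_mod_cast h
    obtain ⟨c, hc⟩ : ∃ c : ℤ, (a + b + 3) * (a + 1) * (b + 2) = 2 * c := by
      rcases Int.even_or_odd a with ⟨x, hx⟩ | ⟨x, hx⟩ <;>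
        rcases Int.even_or_odd b with ⟨y, hy⟩ | ⟨y, hy⟩ <;> subst hx hy
      · exact ⟨(x + x + y + y + 3) * (x + x + 1) * (y + 1), by ring⟩
      · exact ⟨(x + y + 2) * (x + x + 1) * (y + y + 3), by ring⟩
      · exact ⟨(x + y + 2) * (x + x + 2) * (y + y + 2), by ring⟩
      · exact ⟨(x + x + y + y + 5) * (x + 1) * (y + y + 3), by ring⟩
    have hmc : m = (c : ℚ) := by
      rw [hm]
      have : ((a : ℚ) + b + 3) * (a + 1) * (b + 2) = 2 * c := by exact_mod_cast hc
      rw [this]; ring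
    have hceil : ⌈(m + n + a + b + 3) / 2⌉ ≤ c := by
      apply Int.ceil_le.mpr
      rw [hm, hn, ← hmc, hm]
      have hQ' : (0:ℚ) ≤ _ := le_trans (by norm_num) hQ
      rw [div_le_iff₀ (by norm_num : (0:ℚ) < 2)]
      nlinarith [mul_nonneg (mul_nonneg haQ hbQ) hQ', mul_nonneg haQ hQ',
        mul_nonneg hbQ hQ', mul_nonneg (add_nonneg haQ hbQ) hQ']
    calc ((⌈(m + n + a + b + 3) / 2⌉ : ℤ) : ℚ) ≤ (c : ℚ) := by exact_mod_cast hceil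
      _ = m := hmc.symm
      _ ≤ max m n := le_max_left _ _
  · -- b - a ≥ 2, max = n
    have hQ : (2 : ℚ) ≤ (b : ℚ) - (a : ℚ) := by
      have : (2:ℤ) ≤ b - a := by omega
      exact_mod_cast this
    obtain ⟨c, hc⟩ : ∃ c : ℤ, (a + b + 3) * (a + 2) * (b + 1) = 2 * c := by
      rcases Int.even_or_odd a with ⟨x, hx⟩ | ⟨x, hx⟩ <;>
        rcases Int.even_or_odd b with ⟨y, hy⟩ | ⟨y, hy⟩ <;> subst hx hy
      · exact ⟨(x + x + y + y + 3) * (x + 1) * (y + y + 1), by ring⟩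
      · exact ⟨(x + y + 2) * (x + x + 2) * (y + y + 2), by ring⟩
      · exact ⟨(x + y + 2) * (x + x + 3) * (y + y + 1), by ring⟩
      · exact ⟨(x + x + y + y + 5) * (x + x + 3) * (y + 1), by ring⟩
    have hnc : n = (c : ℚ) := by
      rw [hn]
      have : ((a : ℚ) + b + 3) * (a + 2) * (b + 1) = 2 * c := by exact_mod_cast hc
      rw [this]; ring
    have hceil : ⌈(m + n + a + b + 3) / 2⌉ ≤ c := by
      apply Int.ceil_le.mpr
      rw [hm, hn, ← hnc, hn]
      have hQ' : (0:ℚ) ≤ _ := le_trans (by norm_num) hQ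
      rw [div_le_iff₀ (by norm_num : (0:ℚ) < 2)]
      nlinarith [mul_nonneg (mul_nonneg haQ hbQ) hQ', mul_nonneg haQ hQ',
        mul_nonneg hbQ hQ', mul_nonneg (add_nonneg haQ hbQ) hQ']
    calc ((⌈(m + n + a + b + 3) / 2⌉ : ℤ) : ℚ) ≤ (c : ℚ) := by exact_mod_cast hceil
      _ = n := hnc.symm
      _ ≤ max m n := le_max_right _ _
end

section
/- Let V = ℂ^k with basis e₁,…,e_k and dual basis α₁,…,α_k, and let T_k = Σ_{i<j} (α_i⊗α_j − α_j⊗α_i)⊗(e_i∧e_j) ∈ V*⊗V*⊗Λ²V. Then T_k − T_{k−1} = lim_{t→0} (1/t)[ Σ_{j=1}^{k−1} (α_k + tα_j)⊗(α_k − tα_j)⊗(e_j∧e_k) − α_k⊗α_k⊗(Σ_{i=1}^{k−1} e_i∧e_k) ], where T_{k−1} denotes the analogous sum over 1 ≤ i < j ≤ k−1. In particular T_k − T_{k−1} has border rank at most k. -/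
open Filter Topology

/-- Standard basis vector `e_i` of `ℂ^k` (identified with its dual basis vector `α_i`). -/
noncomputable def basisVec (k : ℕ) (i : Fin k) : Fin k → ℂ := Pi.single i 1

/-- The wedge `e_p ∧ e_q`, realized as the antisymmetric matrix `E_{pq} - E_{qp}`. -/
noncomputable def wedge (k : ℕ) (p q : Fin k) : Fin k → Fin k → ℂ :=
  fun c d => basisVec k p c * basisVec k q d - basisVec k q c * basisVec k p d

/-- The rank-one tensor `u ⊗ v ⊗ w` in `V* ⊗ V* ⊗ Λ²V`, in coordinates. -/
noncomputable def tri (k : ℕ) (u v : Fin k → ℂ) (w : Fin k → Fin k → ℂ) :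
    Fin k → Fin k → Fin k → Fin k → ℂ :=
  fun a b c d => u a * v b * w c d

/-- `T r = Σ_{i<j, j<r} (α_i ⊗ α_j - α_j ⊗ α_i) ⊗ (e_i ∧ e_j)`; for `r = k` this is `T_k`,
and for `r = k - 1` it is the copy of `T_{k-1}` inside `V* ⊗ V* ⊗ Λ²V`. -/
noncomputable def T (k : ℕ) (r : ℕ) : Fin k → Fin k → Fin k → Fin k → ℂ :=
  ∑ i : Fin k, ∑ j : Fin k,
    if i < j ∧ (j : ℕ) < r then
      tri k (basisVec k i) (basisVec k j) (wedge k i j)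
        - tri k (basisVec k j) (basisVec k i) (wedge k i j)
    else 0

lemma Tdiff (k : ℕ) (hk : 2 ≤ k) (last : Fin k) (hlast : (last : ℕ) = k - 1) :
    T k k - T k (k-1) = ∑ j : Fin k, if (j:ℕ) < k - 1 then
      (tri k (basisVec k j) (basisVec k last) (wedge k j last)
        - tri k (basisVec k last) (basisVec k j) (wedge k j last)) else 0 := by
  unfold T
  rw [← Finset.sum_sub_distrib]
  have h1 : ∀ i : Fin k,
      ((∑ j : Fin k, if i < j ∧ (j : ℕ) < k then
        tri k (basisVec k i) (basisVec k j) (wedge k i j)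
          - tri k (basisVec k j) (basisVec k i) (wedge k i j) else 0)
      - ∑ j : Fin k, if i < j ∧ (j : ℕ) < k - 1 then
        tri k (basisVec k i) (basisVec k j) (wedge k i j)
          - tri k (basisVec k j) (basisVec k i) (wedge k i j) else 0)
      = (if (i:ℕ) < k - 1 then
          tri k (basisVec k i) (basisVec k last) (wedge k i last)
            - tri k (basisVec k last) (basisVec k i) (wedge k i last) else 0) := by
    intro i
    rw [← Finset.sum_sub_distrib]
    have h2 : ∀ j : Fin k,
        ((if i < j ∧ (j : ℕ) < k then
          tri k (basisVec k i) (basisVec k j) (wedge k i j)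
            - tri k (basisVec k j) (basisVec k i) (wedge k i j) else 0)
        - (if i < j ∧ (j : ℕ) < k - 1 then
          tri k (basisVec k i) (basisVec k j) (wedge k i j)
            - tri k (basisVec k j) (basisVec k i) (wedge k i j) else 0))
        = (if j = last then (if (i:ℕ) < k - 1 then
            tri k (basisVec k i) (basisVec k j) (wedge k i j)
              - tri k (basisVec k j) (basisVec k i) (wedge k i j) else 0) else 0) := by
      intro j
      have hjk : (j : ℕ) < k := j.isLt
      have hle : (j : ℕ) ≤ k - 1 := Nat.le_sub_one_of_lt hjk
      by_cases hj : (j : ℕ) < k - 1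
      · have : j ≠ last := by
          intro h; rw [h, hlast] at hj; exact lt_irrefl _ hj
        simp [hj, hjk, this]
      · have hje : j = last := by
          apply Fin.ext; rw [hlast]; omega
        have hij : i < j ↔ (i:ℕ) < k - 1 := by
          rw [Fin.lt_def, hje, hlast]
        subst hje
        simp [hj, hjk, hij]
    rw [Finset.sum_congr rfl (fun j _ => h2 j), Finset.sum_ite_eq' Finset.univ last,
      if_pos (Finset.mem_univ last)]
  rw [Finset.sum_congr rfl (fun i _ => h1 i)]

lemma key (k : ℕ) (last : Fin k) (t : ℂ) (ht : t ≠ 0) :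
    (t⁻¹ •
        ((∑ j : Fin k, if (j : ℕ) < k - 1 then
            tri k (basisVec k last + t • basisVec k j) (basisVec k last - t • basisVec k j)
              (wedge k j last)
          else 0)
          - tri k (basisVec k last) (basisVec k last)
              (∑ i : Fin k, if (i : ℕ) < k - 1 then wedge k i last else 0)))
    = (∑ j : Fin k, if (j:ℕ) < k - 1 then
      (tri k (basisVec k j) (basisVec k last) (wedge k j last)
        - tri k (basisVec k last) (basisVec k j) (wedge k j last)) else 0)
      + t • (∑ j : Fin k, if (j:ℕ) < k - 1 then
          -(tri k (basisVec k j) (basisVec k j) (wedge k j last)) else 0) := by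
  funext a b c d
  simp only [Pi.smul_apply, Pi.sub_apply, Pi.add_apply, Finset.sum_apply, tri,
    smul_eq_mul, apply_ite (fun f : Fin k → Fin k → Fin k → Fin k → ℂ => f a b c d),
    Pi.zero_apply, apply_ite (fun f : Fin k → Fin k → ℂ => f c d), Pi.neg_apply]
  rw [Finset.mul_sum, ← Finset.sum_sub_distrib, Finset.mul_sum]
  rw [Finset.mul_sum Finset.univ (fun j : Fin k => if (j:ℕ) < k - 1 then
      -(basisVec k j a * basisVec k j b * wedge k j last c d) else 0) t, ← Finset.sum_add_distrib]
  refine Finset.sum_congr rfl fun j _ => ?_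
  split_ifs with h
  · field_simp; ring
  · simp

lemma mem_set (k : ℕ) (last : Fin k) (hlast : (last : ℕ) = k - 1) (t : ℂ) (ht : t ≠ 0) :
    (t⁻¹ •
        ((∑ j : Fin k, if (j : ℕ) < k - 1 then
            tri k (basisVec k last + t • basisVec k j) (basisVec k last - t • basisVec k j)
              (wedge k j last)
          else 0)
          - tri k (basisVec k last) (basisVec k last)
              (∑ i : Fin k, if (i : ℕ) < k - 1 then wedge k i last else 0)))
    ∈ {x : Fin k → Fin k → Fin k → Fin k → ℂ |
        ∃ (u v : Fin k → (Fin k → ℂ)) (w : Fin k → (Fin k → Fin k → ℂ)),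
          (∀ i c d, w i c d = - w i d c) ∧ x = ∑ i : Fin k, tri k (u i) (v i) (w i)} := by
  refine ⟨fun i => if (i:ℕ) < k - 1 then t⁻¹ • (basisVec k last + t • basisVec k i)
      else basisVec k last,
    fun i => if (i:ℕ) < k - 1 then basisVec k last - t • basisVec k i
      else (-t⁻¹) • basisVec k last,
    fun i => if (i:ℕ) < k - 1 then wedge k i last
      else ∑ m : Fin k, if (m:ℕ) < k - 1 then wedge k m last else 0, ?_, ?_⟩
  · intro i c d
    dsimp only
    split_ifs
    · simp only [wedge]; ring
    · simp only [Finset.sum_apply, wedge]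
      rw [← Finset.sum_neg_distrib]
      refine Finset.sum_congr rfl fun m _ => ?_
      split_ifs <;> simp [wedge] <;> ring
  · have hlt : ∀ i : Fin k, ¬((i:ℕ) < k - 1) → i = last := by
      intro i h
      apply Fin.ext; rw [hlast]
      have := i.isLt; omega
    have hnl : ¬((last:ℕ) < k - 1) := by rw [hlast]; exact lt_irrefl _
    funext a b c d
    simp only [Pi.smul_apply, Pi.sub_apply, Pi.add_apply, Finset.sum_apply, tri,
      smul_eq_mul, apply_ite (fun f : Fin k → Fin k → Fin k → Fin k → ℂ => f a b c d),
      Pi.zero_apply, apply_ite (fun f : Fin k → Fin k → ℂ => f c d),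
      apply_ite (fun f : Fin k → ℂ => f a), apply_ite (fun f : Fin k → ℂ => f b),
      Pi.neg_apply]
    have common : ∀ s : ℂ,
        s = (∑ i : Fin k, if (i:ℕ) < k - 1 then
            (t⁻¹ * (basisVec k last a + t * basisVec k i a)) *
              (basisVec k last b - t * basisVec k i b) * wedge k i last c d else 0)
          + basisVec k last a * ((-t⁻¹) * basisVec k last b) *
            (∑ m : Fin k, if (m:ℕ) < k - 1 then wedge k m last c d else 0) → True :=
      fun _ _ => trivial
    rw [mul_sub, Finset.mul_sum]
    have lhs_eq : ∀ i : Fin k,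
        t⁻¹ * (if (i:ℕ) < k - 1 then
            (basisVec k last a + t * basisVec k i a) *
              (basisVec k last b - t * basisVec k i b) * wedge k i last c d else 0)
        = (if (i:ℕ) < k - 1 then
            (t⁻¹ * (basisVec k last a + t * basisVec k i a)) *
              (basisVec k last b - t * basisVec k i b) * wedge k i last c d else 0) := by
      intro i; split_ifs <;> ring
    rw [Finset.sum_congr rfl fun i _ => lhs_eq i]
    have rhs_eq : ∀ i : Fin k,
        (if (i:ℕ) < k - 1 then t⁻¹ * (basisVec k last a + t * basisVec k i a)
            else basisVec k last a) *
          (if (i:ℕ) < k - 1 then basisVec k last b - t * basisVec k i b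
            else (-t⁻¹) * basisVec k last b) *
          (if (i:ℕ) < k - 1 then wedge k i last c d
            else ∑ m : Fin k, if (m:ℕ) < k - 1 then wedge k m last c d else 0)
        = (if (i:ℕ) < k - 1 then
            (t⁻¹ * (basisVec k last a + t * basisVec k i a)) *
              (basisVec k last b - t * basisVec k i b) * wedge k i last c d else 0)
          + (if i = last then basisVec k last a * ((-t⁻¹) * basisVec k last b) *
              (∑ m : Fin k, if (m:ℕ) < k - 1 then wedge k m last c d else 0) else 0) := by
      intro i
      by_cases h : (i:ℕ) < k - 1
      · have : i ≠ last := by intro he; rw [he] at h; exact hnl h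
        simp [h, this]
      · rw [hlt i h]; simp [hnl]
    rw [Finset.sum_congr rfl fun i _ => rhs_eq i, Finset.sum_add_distrib,
      Finset.sum_ite_eq' Finset.univ last, if_pos (Finset.mem_univ last)]
    ring

theorem stmt11 (k : ℕ) (hk : 2 ≤ k) (last : Fin k) (hlast : (last : ℕ) = k - 1) :
    Tendsto
      (fun t : ℂ => t⁻¹ •
        ((∑ j : Fin k, if (j : ℕ) < k - 1 then
            tri k (basisVec k last + t • basisVec k j) (basisVec k last - t • basisVec k j)
              (wedge k j last)
          else 0)
          - tri k (basisVec k last) (basisVec k last)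
              (∑ i : Fin k, if (i : ℕ) < k - 1 then wedge k i last else 0)))
      (𝓝[≠] (0 : ℂ)) (𝓝 (T k k - T k (k - 1))) ∧
    (T k k - T k (k - 1)) ∈
      closure {x : Fin k → Fin k → Fin k → Fin k → ℂ |
        ∃ (u v : Fin k → (Fin k → ℂ)) (w : Fin k → (Fin k → Fin k → ℂ)),
          (∀ i c d, w i c d = - w i d c) ∧ x = ∑ i : Fin k, tri k (u i) (v i) (w i)} := by
  have hT := Tdiff k hk last hlast
  have hf : ∀ t : ℂ, t ≠ 0 →
      (t⁻¹ •
        ((∑ j : Fin k, if (j : ℕ) < k - 1 then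
            tri k (basisVec k last + t • basisVec k j) (basisVec k last - t • basisVec k j)
              (wedge k j last)
          else 0)
          - tri k (basisVec k last) (basisVec k last)
              (∑ i : Fin k, if (i : ℕ) < k - 1 then wedge k i last else 0)))
      = (T k k - T k (k - 1)) + t • (∑ j : Fin k, if (j:ℕ) < k - 1 then
          -(tri k (basisVec k j) (basisVec k j) (wedge k j last)) else 0) := by
    intro t ht
    rw [key k last t ht, ← hT]
  have h1 : Tendsto (fun t : ℂ => (T k k - T k (k - 1)) + t • (∑ j : Fin k,
        if (j:ℕ) < k - 1 then
          -(tri k (basisVec k j) (basisVec k j) (wedge k j last)) else 0))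
      (𝓝 (0 : ℂ)) (𝓝 (T k k - T k (k - 1))) := by
    have h2 : Tendsto (fun _ : ℂ => T k k - T k (k - 1)) (𝓝 (0 : ℂ))
        (𝓝 (T k k - T k (k - 1))) := tendsto_const_nhds
    have h3 := (tendsto_id (x := 𝓝 (0 : ℂ))).smul_const (∑ j : Fin k,
        if (j:ℕ) < k - 1 then
          -(tri k (basisVec k j) (basisVec k j) (wedge k j last)) else 0)
    have h4 := h2.add h3
    simpa using h4
  have he : (fun t : ℂ => (T k k - T k (k - 1)) + t • (∑ j : Fin k,
        if (j:ℕ) < k - 1 then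
          -(tri k (basisVec k j) (basisVec k j) (wedge k j last)) else 0))
      =ᶠ[𝓝[≠] (0 : ℂ)]
      (fun t : ℂ => t⁻¹ •
        ((∑ j : Fin k, if (j : ℕ) < k - 1 then
            tri k (basisVec k last + t • basisVec k j) (basisVec k last - t • basisVec k j)
              (wedge k j last)
          else 0)
          - tri k (basisVec k last) (basisVec k last)
              (∑ i : Fin k, if (i : ℕ) < k - 1 then wedge k i last else 0))) :=
    eventually_nhdsWithin_of_forall fun t ht => (hf t ht).symm
  have htend := (h1.mono_left nhdsWithin_le_nhds).congr' he
  refine ⟨htend, ?_⟩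
  exact mem_closure_of_tendsto htend
    (eventually_nhdsWithin_of_forall fun t ht => mem_set k last hlast t ht)
end

section
/- Let ζ be a primitive third root of unity in ℂ. Consider the Hankel (catalecticant) matrices M(s,t) = [[s⁴, s³t, s²t²],[s³t, s²t², st³],[s²t², st³, t⁴]]. Then every nonzero M(s,t) has rank one, and the five matrices M(1,0), M(1,1), M(1,ζ), M(1,ζ²), M(0,1) are linearly independent in the 5-dimensional space of 3×3 Hankel matrices {[[x₀,x₁,x₂],[x₁,x₂,x₃],[x₂,x₃,x₄]]}. -/
open Matrix

/-- The Hankel (catalecticant) matrix coming from the degree-four Veronese embedding. -/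
noncomputable def M (s t : ℂ) : Matrix (Fin 3) (Fin 3) ℂ :=
  !![s ^ 4, s ^ 3 * t, s ^ 2 * t ^ 2;
     s ^ 3 * t, s ^ 2 * t ^ 2, s * t ^ 3;
     s ^ 2 * t ^ 2, s * t ^ 3, t ^ 4]

lemma rank_ne_zero_of_ne_zero {A : Matrix (Fin 3) (Fin 3) ℂ} (h : A ≠ 0) : A.rank ≠ 0 := by
  intro h0
  apply h
  rw [Matrix.rank, Submodule.finrank_eq_zero, LinearMap.range_eq_bot] at h0
  ext i j
  have := congrFun (congrArg (fun f => f (Pi.single j 1)) h0) i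
  simpa [Matrix.mulVecLin, Matrix.mulVec_single] using this

lemma M_eq_vecMulVec (s t : ℂ) : M s t = vecMulVec ![s^2, s*t, t^2] ![s^2, s*t, t^2] := by
  ext i j
  fin_cases i <;> fin_cases j <;> simp [M, vecMulVec] <;> ring

lemma rank_M_le (s t : ℂ) : (M s t).rank ≤ 1 := by
  rw [M_eq_vecMulVec, vecMulVec_eq (Fin 1)]
  calc (replicateCol (Fin 1) ![s^2, s*t, t^2] * replicateRow (Fin 1) ![s^2, s*t, t^2]).rank
      ≤ (replicateCol (Fin 1) ![s^2, s*t, t^2]).rank := rank_mul_le_left _ _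
    _ ≤ Fintype.card (Fin 1) := rank_le_card_width _
    _ = 1 := by simp

theorem stmt14 (ζ : ℂ) (hζ : IsPrimitiveRoot ζ 3) :
    (∀ s t : ℂ, M s t ≠ 0 → (M s t).rank = 1) ∧
      LinearIndependent ℂ ![M 1 0, M 1 1, M 1 ζ, M 1 (ζ ^ 2), M 0 1] := by
  have h3 : ζ ^ 3 = 1 := hζ.pow_eq_one
  have hne : ζ ≠ 1 := hζ.ne_one (by norm_num)
  have hsum : ζ ^ 2 + ζ + 1 = 0 := by
    have : (ζ - 1) * (ζ ^ 2 + ζ + 1) = 0 := by linear_combination h3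
    rcases mul_eq_zero.mp this with h | h
    · exact absurd (sub_eq_zero.mp h) hne
    · exact h
  constructor
  · intro s t h
    exact le_antisymm (rank_M_le s t) (Nat.one_le_iff_ne_zero.mpr (rank_ne_zero_of_ne_zero h))
  · rw [Fintype.linearIndependent_iff]
    intro g hg
    have key : ∀ i j : Fin 3,
        (∑ k : Fin 5, g k • ![M 1 0, M 1 1, M 1 ζ, M 1 (ζ ^ 2), M 0 1] k) i j = 0 := by
      intro i j; rw [hg]; rfl
    have e00 := key 0 0
    have e01 := key 0 1
    have e02 := key 0 2
    have e12 := key 1 2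
    have e22 := key 2 2
    simp [Fin.sum_univ_five, M, Matrix.add_apply, Matrix.smul_apply] at e00 e01 e02 e12 e22
    have hζne : ζ - ζ ^ 2 ≠ 0 := by
      have h0 : ζ ≠ 0 := hζ.ne_zero (by norm_num)
      intro h
      apply hne
      have hm : ζ * (1 - ζ) = 0 := by linear_combination h
      rcases mul_eq_zero.mp hm with h' | h'
      · exact absurd h' h0
      · linear_combination -h'
    have f02 : g 1 + g 2 * ζ ^ 2 + g 3 * ζ = 0 := by
      linear_combination e02 - g 3 * ζ * h3
    have f12 : g 1 + g 2 + g 3 = 0 := by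
      linear_combination e12 - g 2 * h3 - g 3 * (ζ ^ 3 + 1) * h3
    have f22 : g 1 + g 2 * ζ + g 3 * ζ ^ 2 + g 4 = 0 := by
      linear_combination e22 - g 2 * ζ * h3 - g 3 * ζ ^ 2 * (ζ ^ 3 + 1) * h3
    have hg1 : g 1 = 0 := by
      linear_combination (e01 + f02 + f12 - (g 2 + g 3) * hsum) / 3
    have hg2 : g 2 = 0 := by
      have hm : g 2 * (ζ - ζ ^ 2) = 0 := by
        linear_combination e01 - ζ ^ 2 * f12 - (1 - ζ ^ 2) * hg1
      rcases mul_eq_zero.mp hm with h' | h'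
      · exact h'
      · exact absurd h' hζne
    have hg3 : g 3 = 0 := by linear_combination f12 - hg1 - hg2
    have hg0 : g 0 = 0 := by linear_combination e00 - hg1 - hg2 - hg3
    have hg4 : g 4 = 0 := by linear_combination f22 - hg1 - ζ * hg2 - ζ ^ 2 * hg3
    intro i
    fin_cases i <;> assumption
end

section
/- Let V = ℂ^k (k ≥ 2) with the tensor T_k = Σ_{i<j} (α_i⊗α_j − α_j⊗α_i)⊗(e_i∧e_j) ∈ V*⊗V*⊗Λ²V viewed as the linear map T_k: Λ²V* → V*⊗V* (inclusion of skew-symmetric matrices). Then the first Koszul flattening T_k^∧1: V*⊗Λ²V* → Λ²V*⊗V*, defined by sending ω⊗η to the image of ω⊗T_k(η) under the skew-symmetrization map V*⊗V*⊗V* → Λ²V*⊗V* on the first two factors, is surjective; its rank is k·C(k,2). -/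
/-- The first Koszul flattening `T_k^∧1 : V* ⊗ Λ²V* → Λ²V* ⊗ V*` in coordinates:
an element of `V* ⊗ V* ⊗ V*` with coordinates `F a p q` is sent to its
skew-symmetrization in the first two factors, `(c,d,q) ↦ F c d q - F d c q`. -/
noncomputable def koszul (k : ℕ) :
    (Fin k → Fin k → Fin k → ℂ) →ₗ[ℂ] (Fin k → Fin k → Fin k → ℂ) where
  toFun F := fun c d q => F c d q - F d c q
  map_add' F G := by funext c d q; simp only [Pi.add_apply]; ring
  map_smul' r F := by funext c d q; simp only [Pi.smul_apply, smul_eq_mul,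
    RingHom.id_apply]; ring

/-- The domain `V* ⊗ Λ²V*`: tensors antisymmetric in the last two indices. -/
noncomputable def domSub (k : ℕ) : Submodule ℂ (Fin k → Fin k → Fin k → ℂ) where
  carrier := {F | ∀ a p q, F a p q = - F a q p}
  add_mem' := by
    intro F G hF hG a p q
    simp only [Pi.add_apply, hF a p q, hG a p q]; ring
  zero_mem' := by intro a p q; simp
  smul_mem' := by
    intro r F hF a p q
    simp only [Pi.smul_apply, smul_eq_mul, hF a p q]; ring

/-- The codomain `Λ²V* ⊗ V*`: tensors antisymmetric in the first two indices. -/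
noncomputable def codSub (k : ℕ) : Submodule ℂ (Fin k → Fin k → Fin k → ℂ) where
  carrier := {G | ∀ c d q, G c d q = - G d c q}
  add_mem' := by
    intro F G hF hG c d q
    simp only [Pi.add_apply, hF c d q, hG c d q]; ring
  zero_mem' := by intro c d q; simp
  smul_mem' := by
    intro r F hF c d q
    simp only [Pi.smul_apply, smul_eq_mul, hF c d q]; ring


/-- Coordinate linear equivalence of `codSub k` with functions on ordered pairs times `Fin k`. -/
noncomputable def codEquiv (k : ℕ) :
    codSub k ≃ₗ[ℂ] ({p : Fin k × Fin k // p.1 < p.2} × Fin k → ℂ) where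
  toFun G := fun x => (G : Fin k → Fin k → Fin k → ℂ) x.1.1.1 x.1.1.2 x.2
  map_add' G H := rfl
  map_smul' r G := rfl
  invFun f := ⟨fun c d q =>
      if h : c < d then f (⟨(c, d), h⟩, q)
      else if h' : d < c then - f (⟨(d, c), h'⟩, q) else 0, by
    intro c d q
    rcases lt_trichotomy c d with h | h | h
    · simp [h, not_lt_of_gt h]
    · subst h; simp [lt_irrefl]
    · simp [h, not_lt_of_gt h]⟩
  left_inv G := by
    apply Subtype.ext
    funext c d q
    have hG := G.2
    rcases lt_trichotomy c d with h | h | h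
    · simp [h]
    · subst h
      have h0 : (G : Fin k → Fin k → Fin k → ℂ) c c q = 0 := by
        have := hG c c q; linear_combination this / 2
      simp [lt_irrefl, h0]
    · have := hG c d q
      simp [h, not_lt_of_gt h, this]
  right_inv f := by
    funext x
    obtain ⟨⟨⟨c, d⟩, h⟩, q⟩ := x
    simp [h]

def pairEquiv (k : ℕ) :
    {p : Fin k × Fin k // p.1 < p.2} ≃ Σ a : Fin k, (Finset.Ioi a : Finset (Fin k)) where
  toFun p := ⟨p.1.1, ⟨p.1.2, Finset.mem_Ioi.mpr p.2⟩⟩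
  invFun x := ⟨(x.1, x.2.1), Finset.mem_Ioi.mp x.2.2⟩
  left_inv p := rfl
  right_inv x := rfl

lemma card_pairs (k : ℕ) :
    Fintype.card {p : Fin k × Fin k // p.1 < p.2} = k.choose 2 := by
  rw [Fintype.card_congr (pairEquiv k), Fintype.card_sigma]
  have h1 : ∀ a : Fin k, Fintype.card (Finset.Ioi a : Finset (Fin k)) = k - 1 - a := by
    intro a; rw [Fintype.card_coe, Fin.card_Ioi]
  simp only [h1]
  rw [Fin.sum_univ_eq_sum_range (fun i => k - 1 - i) k]
  have h2 := Finset.sum_range_reflect (fun i => i) k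
  have h3 : ∀ i ∈ Finset.range k, k - 1 - i = (fun i => i) (k - 1 - i) := fun i _ => rfl
  calc ∑ i ∈ Finset.range k, (k - 1 - i) = ∑ i ∈ Finset.range k, i := by
        rw [← h2]
    _ = k * (k - 1) / 2 := Finset.sum_range_id k
    _ = k.choose 2 := (Nat.choose_two_right k).symm

lemma map_eq_cod (k : ℕ) : (domSub k).map (koszul k) = codSub k := by
  apply le_antisymm
  · rintro _ ⟨F, hF, rfl⟩
    intro c d q
    show F c d q - F d c q = -(F d c q - F c d q)
    ring
  · intro G hG
    refine ⟨fun a p q => (G a p q - G a q p - G p q a) / 2, ?_, ?_⟩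
    · intro a p q
      show (G a p q - G a q p - G p q a) / 2 = -((G a q p - G a p q - G q p a) / 2)
      rw [hG q p a]; ring
    · funext c d q
      show (G c d q - G c q d - G d q c) / 2 - (G d c q - G d q c - G c q d) / 2 = G c d q
      rw [hG d c q]; ring

theorem stmt16 (k : ℕ) (hk : 2 ≤ k) :
    (domSub k).map (koszul k) = codSub k ∧
      Module.finrank ℂ ((domSub k).map (koszul k)) = k * k.choose 2 := by
  refine ⟨map_eq_cod k, ?_⟩
  rw [map_eq_cod k, (codEquiv k).finrank_eq, Module.finrank_pi, Fintype.card_prod,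
    card_pairs, Fintype.card_fin, Nat.mul_comm]
end

section
/- For all integers a,b ≥ 0, the constant rank r = C(a+b+4,3) − C(a+3,3) − C(b+3,3) satisfies r < min(m,n), where m = (a+b+3)(a+1)(b+2)/2 and n = (a+b+3)(a+2)(b+1)/2; consequently ⌈m·n/r⌉ > max(m,n). -/
lemma ch2 (k : ℕ) : (k + 2).choose 2 * 2 = (k + 1) * (k + 2) := by
  induction k with
  | zero => rfl
  | succ k ih =>
    have : (k + 3).choose 2 = (k + 2).choose 1 + (k + 2).choose 2 := rfl
    rw [this, Nat.choose_one_right]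
    nlinarith [ih]

lemma ch3 (k : ℕ) : (k + 3).choose 3 * 6 = (k + 1) * (k + 2) * (k + 3) := by
  induction k with
  | zero => rfl
  | succ k ih =>
    have : (k + 4).choose 3 = (k + 3).choose 2 + (k + 3).choose 3 := rfl
    rw [this]
    have h2 := ch2 (k + 1)
    nlinarith [ih, h2]

lemma ch3q (k : ℕ) : ((k + 3).choose 3 : ℚ) = ((k : ℚ) + 1) * ((k : ℚ) + 2) * ((k : ℚ) + 3) / 6 := by
  have h := ch3 k
  have h' : ((k + 3).choose 3 : ℚ) * 6 = ((k : ℚ) + 1) * ((k : ℚ) + 2) * ((k : ℚ) + 3) := by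
    exact_mod_cast h
  rw [eq_div_iff (by norm_num : (6 : ℚ) ≠ 0)]
  exact h' 

theorem stmt19 (a b : ℕ) (m n r : ℚ)
    (hm : m = ((a + b + 3) * (a + 1) * (b + 2) : ℚ) / 2)
    (hn : n = ((a + b + 3) * (a + 2) * (b + 1) : ℚ) / 2)
    (hr : r = ((a + b + 4).choose 3 : ℚ) - ((a + 3).choose 3 : ℚ) - ((b + 3).choose 3 : ℚ)) :
    r < min m n ∧ max m n < (⌈m * n / r⌉ : ℚ) := by
  have ha : (0 : ℚ) ≤ (a : ℚ) := Nat.cast_nonneg a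
  have hb : (0 : ℚ) ≤ (b : ℚ) := Nat.cast_nonneg b
  have e1 : ((a + b + 4).choose 3 : ℚ)
      = ((a : ℚ) + (b : ℚ) + 2) * ((a : ℚ) + (b : ℚ) + 3) * ((a : ℚ) + (b : ℚ) + 4) / 6 := by
    have h := ch3q (a + b + 1)
    have : a + b + 4 = a + b + 1 + 3 := by ring
    rw [this, h]; push_cast; ring
  have e2 : ((a + 3).choose 3 : ℚ) = ((a : ℚ) + 1) * ((a : ℚ) + 2) * ((a : ℚ) + 3) / 6 := ch3q a
  have e3 : ((b + 3).choose 3 : ℚ) = ((b : ℚ) + 1) * ((b : ℚ) + 2) * ((b : ℚ) + 3) / 6 := ch3q b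
  rw [e1, e2, e3] at hr
  have hr0 : 0 < r := by
    rw [hr]
    nlinarith [mul_nonneg ha hb, mul_nonneg (mul_nonneg ha ha) hb,
      mul_nonneg ha (mul_nonneg hb hb), mul_nonneg ha ha, mul_nonneg hb hb]
  have hrm : r < m := by
    rw [hr, hm]
    nlinarith [mul_nonneg ha hb, mul_nonneg (mul_nonneg ha ha) hb,
      mul_nonneg ha (mul_nonneg hb hb), mul_nonneg ha ha, mul_nonneg hb hb]
  have hrn : r < n := by
    rw [hr, hn]
    nlinarith [mul_nonneg ha hb, mul_nonneg (mul_nonneg ha ha) hb,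
      mul_nonneg ha (mul_nonneg hb hb), mul_nonneg ha ha, mul_nonneg hb hb]
  have hm0 : 0 < m := lt_trans hr0 hrm
  have hn0 : 0 < n := lt_trans hr0 hrn
  refine ⟨lt_min hrm hrn, ?_⟩
  have key : max m n < m * n / r := by
    apply max_lt
    · rw [lt_div_iff₀ hr0]; nlinarith
    · rw [lt_div_iff₀ hr0]; nlinarith
  exact lt_of_lt_of_le key (Int.le_ceil _)
end
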